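/- Let p be a prime p and m > n ≥ 1 integers. In the metacyclic group G presented by generators x, y with relations x^(p^m) = 1, y^(p^n) = 1, y⁻¹xy = x^(1+p^(m-n)), the order of the element x^i * y^j equals the maximum of the orders of x^i and y^j. -/

import Mathlib

open Finset in
lemma nt_key {p : ℕ} (hp : p.Prime) (hodd : Odd p) {q : ℕ} (hq : 0 < q)
    (hdvd : p ∣ q - 1) (i k c : ℕ) :
    (p ^ c ∣ i * ∑ t ∈ range k, q ^ t ↔ p ^ c ∣ i * k) := by
  haveI : Fact p.Prime := ⟨hp⟩
  rcases eq_or_lt_of_le (show 1 ≤ q from hq) with h1 | h1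
  · simp [← h1]
  rcases Nat.eq_zero_or_pos k with rfl | hk
  · simp
  rcases Nat.eq_zero_or_pos i with rfl | hi
  · simp
  have hS : 0 < ∑ t ∈ range k, q ^ t := by
    calc (0:ℕ) < 1 := one_pos
    _ = ∑ t ∈ range 1, q ^ t := by simp
    _ ≤ _ := Finset.sum_le_sum_of_subset (by simpa using hk)
  have hpx : ¬ p ∣ q := by
    intro h
    have h2 := Nat.dvd_sub h hdvd
    rw [Nat.sub_sub_self hq] at h2
    have h3 := Nat.eq_one_of_dvd_one h2; have := hp.two_le; omega
  have hlte := padicValNat.pow_sub_pow (x := q) (y := 1) (p := p) hodd h1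
      (by simpa using hdvd) hpx (n := k) hk.ne'
  simp only [one_pow] at hlte
  have hgeom : (∑ t ∈ range k, q ^ t) * (q - 1) = q ^ k - 1 :=
    geom_sum_mul_of_one_le hq k
  have hq1 : q - 1 ≠ 0 := by omega
  have hmul := padicValNat.mul (p := p) hS.ne' hq1
  rw [hgeom, hlte] at hmul
  have hSk : padicValNat p (∑ t ∈ range k, q ^ t) = padicValNat p k := by omega
  rw [padicValNat_dvd_iff_le (by positivity), padicValNat_dvd_iff_le (by positivity),
    padicValNat.mul hi.ne' hS.ne', padicValNat.mul hi.ne' hk.ne', hSk]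

/-- In the split metacyclic `p`-group
`G = ⟨x, y ∣ x^(p^m) = y^(p^n) = 1, x^y = x^(1+p^(m-n))⟩` with `m > n ≥ 1`,
the order of `x^i * y^j` equals the maximum of the orders of `x^i` and `y^j`. -/
theorem stmt_1 (p m n : ℕ) (hp : p.Prime) (hodd : Odd p) (hn : 1 ≤ n) (hmn : n < m)
    {G : Type*} [Group G] [Finite G] (x y : G)
    (hx : orderOf x = p ^ m) (hy : orderOf y = p ^ n)
    (hconj : y⁻¹ * x * y = x ^ (1 + p ^ (m - n)))
    (hdisj : Subgroup.zpowers x ⊓ Subgroup.zpowers y = ⊥)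
    (hgen : Subgroup.closure {x, y} = ⊤) :
    ∀ i j : ℕ, orderOf (x ^ i * y ^ j) = max (orderOf (x ^ i)) (orderOf (y ^ j)) := by
  intro i j
  set r : ℕ := 1 + p ^ (m - n) with hr
  set q : ℕ := r ^ j with hqdef
  -- basic commuting lemmas
  have h1 : ∀ b : ℕ, x ^ b * y = y * x ^ (b * r) := by
    intro b
    have hc : y⁻¹ * x ^ b * y = x ^ (b * r) := by
      have := conj_pow (i := b) (a := y⁻¹) (b := x)
      rw [inv_inv] at this
      calc y⁻¹ * x ^ b * y = (y⁻¹ * x * y) ^ b := by rw [← this]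
        _ = (x ^ r) ^ b := by rw [hconj]
        _ = x ^ (b * r) := by rw [← pow_mul, mul_comm]
    calc x ^ b * y = y * (y⁻¹ * x ^ b * y) := by group
      _ = y * x ^ (b * r) := by rw [hc]
  have h2 : ∀ t b : ℕ, x ^ b * y ^ t = y ^ t * x ^ (b * r ^ t) := by
    intro t
    induction t with
    | zero => simp
    | succ t ih =>
      intro b
      calc x ^ b * y ^ (t + 1) = (x ^ b * y ^ t) * y := by rw [pow_succ, mul_assoc]
        _ = y ^ t * (x ^ (b * r ^ t) * y) := by rw [ih]; group
        _ = y ^ t * (y * x ^ (b * r ^ t * r)) := by rw [h1]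
        _ = y ^ (t + 1) * x ^ (b * r ^ (t + 1)) := by
            rw [pow_succ, pow_succ, mul_assoc, mul_assoc]
  open Finset in
  have h3 : ∀ k : ℕ, (x ^ i * y ^ j) ^ k
      = y ^ (j * k) * x ^ (i * q * ∑ t ∈ range k, q ^ t) := by
    intro k
    induction k with
    | zero => simp
    | succ k ih =>
      rw [pow_succ, ih]
      have harith : (i * q * (∑ t ∈ range k, q ^ t) + i) * q
          = i * q * ∑ t ∈ range (k + 1), q ^ t := by
        rw [geom_sum_succ]; ring
      have hj : j * k + j = j * (k + 1) := by ring
      calc y ^ (j * k) * x ^ (i * q * ∑ t ∈ range k, q ^ t) * (x ^ i * y ^ j)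
          = y ^ (j * k) * (x ^ (i * q * (∑ t ∈ range k, q ^ t) + i) * y ^ j) := by
            rw [pow_add]; group
        _ = y ^ (j * k) * (y ^ j * x ^ ((i * q * (∑ t ∈ range k, q ^ t) + i) * r ^ j)) := by
            rw [h2]
        _ = y ^ (j * (k + 1)) * x ^ (i * q * ∑ t ∈ range (k + 1), q ^ t) := by
            rw [← mul_assoc, ← pow_add, hj, ← hqdef, harith]
  have h4 : ∀ a b : ℕ, y ^ a * x ^ b = 1 ↔ (p ^ m ∣ b ∧ p ^ n ∣ a) := by
    intro a b
    constructor
    · intro h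
      have hxb : x ^ b = (y ^ a)⁻¹ := eq_inv_of_mul_eq_one_right h
      have hmem : x ^ b ∈ Subgroup.zpowers x ⊓ Subgroup.zpowers y := by
        rw [Subgroup.mem_inf]
        refine ⟨⟨(b : ℤ), by simp⟩, ?_⟩
        rw [hxb]
        exact Subgroup.inv_mem _ ⟨(a : ℤ), by simp⟩
      rw [hdisj, Subgroup.mem_bot] at hmem
      have hya : y ^ a = 1 := by
        have := hxb.symm.trans hmem
        rwa [inv_eq_one] at this
      exact ⟨hx ▸ orderOf_dvd_of_pow_eq_one hmem, hy ▸ orderOf_dvd_of_pow_eq_one hya⟩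
    · rintro ⟨hb, ha⟩
      rw [(orderOf_dvd_iff_pow_eq_one).mp (hx ▸ hb : orderOf x ∣ b),
        (orderOf_dvd_iff_pow_eq_one).mp (hy ▸ ha : orderOf y ∣ a), one_mul]
  have hmn1 : 1 ≤ m - n := by omega
  have hpr : p ∣ r - 1 := by
    rw [hr]
    simpa using dvd_pow_self p (by omega : m - n ≠ 0)
  have hq0 : 0 < q := by positivity
  have hpq : p ∣ q - 1 := by
    have hd := Nat.sub_dvd_pow_sub_pow r 1 j
    simp only [one_pow] at hd
    exact hpr.trans hd
  have hnr : ¬ p ∣ r := by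
    intro h
    have h2 : p ∣ p ^ (m - n) := dvd_pow_self p (by omega)
    have h3 := Nat.dvd_sub h h2
    rw [hr, Nat.add_sub_cancel] at h3
    have := Nat.eq_one_of_dvd_one h3; have := hp.two_le; omega
  have hcop : (p ^ m).Coprime q := by
    rw [hqdef]
    exact (hp.coprime_iff_not_dvd.mpr hnr).pow m j
  have key : ∀ k : ℕ, orderOf (x ^ i * y ^ j) ∣ k ↔
      (orderOf (x ^ i) ∣ k ∧ orderOf (y ^ j) ∣ k) := by
    intro k
    rw [orderOf_dvd_iff_pow_eq_one, h3, h4]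
    have e1 : p ^ m ∣ i * q * ∑ t ∈ range k, q ^ t ↔ p ^ m ∣ i * k := by
      rw [mul_right_comm, Nat.Coprime.dvd_mul_right hcop]
      exact nt_key hp hodd hq0 hpq i k m
    have e2 : orderOf (x ^ i) ∣ k ↔ p ^ m ∣ i * k := by
      rw [orderOf_dvd_iff_pow_eq_one, ← pow_mul, ← orderOf_dvd_iff_pow_eq_one, hx]
    have e3 : orderOf (y ^ j) ∣ k ↔ p ^ n ∣ j * k := by
      rw [orderOf_dvd_iff_pow_eq_one, ← pow_mul, ← orderOf_dvd_iff_pow_eq_one, hy]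
    rw [e1, e2, e3]
  have hord : orderOf (x ^ i * y ^ j) = Nat.lcm (orderOf (x ^ i)) (orderOf (y ^ j)) := by
    apply Nat.dvd_antisymm
    · exact (key _).mpr ⟨Nat.dvd_lcm_left _ _, Nat.dvd_lcm_right _ _⟩
    · obtain ⟨hA, hB⟩ := (key _).mp dvd_rfl
      exact Nat.lcm_dvd hA hB
  have hdA : orderOf (x ^ i) ∣ p ^ m := by
    rw [← hx]; exact orderOf_pow_dvd (x := x) i
  have hdB : orderOf (y ^ j) ∣ p ^ n := by
    rw [← hy]; exact orderOf_pow_dvd (x := y) j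
  obtain ⟨a, _, hA⟩ := (Nat.dvd_prime_pow hp).mp hdA
  obtain ⟨b, _, hB⟩ := (Nat.dvd_prime_pow hp).mp hdB
  rw [hord, hA, hB]
  rcases le_total a b with h | h
  · rw [max_eq_right (Nat.pow_le_pow_right hp.pos h)]
    exact Nat.dvd_antisymm (Nat.lcm_dvd (pow_dvd_pow p h) dvd_rfl) (Nat.dvd_lcm_right _ _)
  · rw [max_eq_left (Nat.pow_le_pow_right hp.pos h)]
    exact Nat.dvd_antisymm (Nat.lcm_dvd dvd_rfl (pow_dvd_pow p h)) (Nat.dvd_lcm_left _ _)
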